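/- Let ε > 0 and let (C(t), R(t), P_C(t), P_R(t)) be a solution of the customer-dynamics model on [t₀, ∞). Then R(t) + P_R(t) tends to p and C(t) + P_C(t) tends to q as t → +∞; moreover the differences R(t)+P_R(t)−p and C(t)+P_C(t)−q are linear combinations of e^{−(ε+λ₅+λ₇)t} and e^{−εt}. -/

import Mathlib

open Real Filter Topology

/-- The customer-dynamics model: `(C, R, PC, PR)` solves the system on `[t0, ∞)`. -/
def IsSolution (l1 l2 l3 l4 l5 l6 l7 b1 b2 eps gam m mR al t0 : ℝ)
    (C R PC PR : ℝ → ℝ) : Prop :=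
  ∀ t : ℝ, t0 ≤ t →
    HasDerivAt C (l7 * R t - (eps + b1 + l5) * C t + (l1 + m * l4) * PC t
      + l2 * R t * PC t) t ∧
    HasDerivAt R (l5 * C t - (eps + b2 + l7) * R t + (l3 + m * l4) * PR t
      + (l2 + mR * l6) * R t * PR t) t ∧
    HasDerivAt PC ((1 - al) * gam + b1 * C t + l7 * PR t - (eps + l5 + l1 + m * l4) * PC t
      - l2 * R t * PC t) t ∧
    HasDerivAt PR (al * gam + b2 * R t + l5 * PC t - (eps + l7 + l3 + m * l4) * PR t
      - (l2 + mR * l6) * R t * PR t) t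

/-- An equilibrium of the customer-dynamics model: all four right-hand sides vanish. -/
def IsEquilibrium (l1 l2 l3 l4 l5 l6 l7 b1 b2 eps gam m mR al : ℝ)
    (C R PC PR : ℝ) : Prop :=
  l7 * R - (eps + b1 + l5) * C + (l1 + m * l4) * PC + l2 * R * PC = 0 ∧
  l5 * C - (eps + b2 + l7) * R + (l3 + m * l4) * PR + (l2 + mR * l6) * R * PR = 0 ∧
  (1 - al) * gam + b1 * C + l7 * PR - (eps + l5 + l1 + m * l4) * PC - l2 * R * PC = 0 ∧
  al * gam + b2 * R + l5 * PC - (eps + l7 + l3 + m * l4) * PR - (l2 + mR * l6) * R * PR = 0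

lemma eq_const_of_derivEqZero (f : ℝ → ℝ) (t0 : ℝ)
    (hf : ∀ t, t0 ≤ t → HasDerivAt f 0 t) : ∀ t, t0 ≤ t → f t = f t0 := by
  intro t ht
  exact constant_of_has_deriv_right_zero
    (fun x hx => (hf x hx.1).continuousAt.continuousWithinAt)
    (fun x hx => (hf x hx.1).hasDerivWithinAt) t ⟨ht, le_refl t⟩

lemma exp_neg_mul_tendsto (c : ℝ) (hc : 0 < c) :
    Tendsto (fun t : ℝ => Real.exp (-c * t)) atTop (𝓝 0) := by
  have h1 : Tendsto (fun t : ℝ => c * t) atTop atTop :=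
    Tendsto.const_mul_atTop hc tendsto_id
  have := Real.tendsto_exp_atBot.comp (tendsto_neg_atTop_atBot.comp h1)
  simpa [Function.comp_def, neg_mul] using this

theorem partial_sums_tendsto (l1 l2 l3 l4 l5 l6 l7 b1 b2 eps gam m mR al : ℝ) (p q t0 : ℝ) (C R PC PR : ℝ → ℝ)
    (hl1 : 0 ≤ l1) (hl2 : 0 ≤ l2) (hl3 : 0 ≤ l3) (hl4 : 0 ≤ l4) (hl5 : 0 ≤ l5)
    (hl6 : 0 ≤ l6) (hl7 : 0 ≤ l7) (hb1 : 0 ≤ b1) (hb2 : 0 ≤ b2) (heps0 : 0 ≤ eps)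
    (hgam : 0 ≤ gam) (hm : 0 ≤ m) (hmR : 0 ≤ mR) (hal0 : 0 ≤ al) (hal1 : al ≤ 1)
    (heps : 0 < eps)
    (hp : p = gam * (al * eps + l5) / (eps * (eps + l5 + l7)))
    (hq : q = gam * ((1 - al) * eps + l7) / (eps * (eps + l5 + l7)))
    (hsol : IsSolution l1 l2 l3 l4 l5 l6 l7 b1 b2 eps gam m mR al t0 C R PC PR) :
    Tendsto (fun t => R t + PR t) atTop (𝓝 p) ∧
    Tendsto (fun t => C t + PC t) atTop (𝓝 q) ∧
    ∃ c1 c2 c3 c4 : ℝ, ∀ t : ℝ, t0 ≤ t →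
      R t + PR t - p = c1 * Real.exp (-(eps + l5 + l7) * t) + c2 * Real.exp (-eps * t) ∧
      C t + PC t - q = c3 * Real.exp (-(eps + l5 + l7) * t) + c4 * Real.exp (-eps * t) := by
  have hk : (0:ℝ) < eps + l5 + l7 := by positivity
  set k : ℝ := eps + l5 + l7 with hk_def
  -- total U = C + PC + R + PR and T = R + PR
  have hU' : ∀ t, t0 ≤ t →
      HasDerivAt (fun t => C t + PC t + R t + PR t)
        (gam - eps * (C t + PC t + R t + PR t)) t := by
    intro t ht
    obtain ⟨h1, h2, h3, h4⟩ := hsol t ht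
    have := ((h1.add h3).add h2).add h4
    refine this.congr_deriv ?_
    ring
  have hT' : ∀ t, t0 ≤ t →
      HasDerivAt (fun t => R t + PR t)
        (al * gam + l5 * (C t + PC t + R t + PR t) - k * (R t + PR t)) t := by
    intro t ht
    obtain ⟨h1, h2, h3, h4⟩ := hsol t ht
    have := h2.add h4
    refine this.congr_deriv ?_
    rw [hk_def]; ring
  -- solve for U
  set A : ℝ := (C t0 + PC t0 + R t0 + PR t0 - gam / eps) * Real.exp (eps * t0) with hA_def
  have hF : ∀ t, t0 ≤ t →
      HasDerivAt (fun t => (C t + PC t + R t + PR t - gam / eps) * Real.exp (eps * t)) 0 t := by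
    intro t ht
    have he : HasDerivAt (fun t : ℝ => Real.exp (eps * t)) (Real.exp (eps * t) * (eps * 1)) t :=
      ((hasDerivAt_id t).const_mul eps).exp
    have := ((hU' t ht).sub_const (gam / eps)).mul he
    refine this.congr_deriv ?_
    field_simp
    ring
  have hUeq : ∀ t, t0 ≤ t →
      C t + PC t + R t + PR t = gam / eps + A * Real.exp (-eps * t) := by
    intro t ht
    have h0 := eq_const_of_derivEqZero _ t0 hF t ht
    rw [← hA_def] at h0
    have hpos : Real.exp (eps * t) ≠ 0 := (Real.exp_pos _).ne'
    have : A * Real.exp (-eps * t) = C t + PC t + R t + PR t - gam / eps := by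
      rw [← h0, neg_mul, Real.exp_neg]
      field_simp
    linarith
  -- constants
  set B : ℝ := l5 * A / (l5 + l7) with hB_def
  have hB : (l5 + l7) * B = l5 * A := by
    rcases eq_or_lt_of_le (by positivity : (0:ℝ) ≤ l5 + l7) with h | h
    · have h5 : l5 = 0 := by linarith
      simp [hB_def, h5]
    · rw [hB_def]; field_simp
  have hkp : k * p = al * gam + l5 * (gam / eps) := by
    rw [hp, hk_def]
    field_simp
  have hpq : p + q = gam / eps := by
    rw [hp, hq]
    field_simp
    ring
  -- solve for T
  have hG : ∀ t, t0 ≤ t →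
      HasDerivAt (fun t => (R t + PR t - p - B * Real.exp (-eps * t)) * Real.exp (k * t)) 0 t := by
    intro t ht
    have he : HasDerivAt (fun t : ℝ => Real.exp (k * t)) (Real.exp (k * t) * (k * 1)) t :=
      ((hasDerivAt_id t).const_mul k).exp
    have hbe : HasDerivAt (fun t : ℝ => B * Real.exp (-eps * t))
        (B * (Real.exp (-eps * t) * (-eps * 1))) t :=
      (((hasDerivAt_id t).const_mul (-eps)).exp).const_mul B
    have := (((hT' t ht).sub_const p).sub hbe).mul he
    refine this.congr_deriv ?_
    simp only [Pi.sub_apply]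
    symm
    rw [hUeq t ht]
    have hke : k - eps = l5 + l7 := by rw [hk_def]; ring
    linear_combination (Real.exp (k * t)) * hkp
      + (Real.exp (k * t) * Real.exp (-eps * t)) * hB
      + (Real.exp (k * t) * Real.exp (-eps * t) * B) * hke
  set c1 : ℝ := (R t0 + PR t0 - p - B * Real.exp (-eps * t0)) * Real.exp (k * t0) with hc1_def
  have hTeq : ∀ t, t0 ≤ t →
      R t + PR t = p + c1 * Real.exp (-k * t) + B * Real.exp (-eps * t) := by
    intro t ht
    have h0 := eq_const_of_derivEqZero _ t0 hG t ht
    rw [← hc1_def] at h0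
    have : c1 * Real.exp (-k * t) = R t + PR t - p - B * Real.exp (-eps * t) := by
      rw [← h0, neg_mul, Real.exp_neg]
      field_simp
      rw [mul_assoc, ← Real.exp_add, add_neg_cancel, Real.exp_zero, mul_one]
    linarith
  have hSeq : ∀ t, t0 ≤ t →
      C t + PC t = q + (-c1) * Real.exp (-k * t) + (A - B) * Real.exp (-eps * t) := by
    intro t ht
    have h1 := hUeq t ht
    have h2 := hTeq t ht
    have : C t + PC t = (C t + PC t + R t + PR t) - (R t + PR t) := by ring
    rw [this, h1, h2]
    linarith [hpq]
  refine ⟨?_, ?_, c1, B, -c1, A - B, ?_⟩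
  · have hlim : Tendsto (fun t => p + c1 * Real.exp (-k * t) + B * Real.exp (-eps * t))
        atTop (𝓝 (p + c1 * 0 + B * 0)) :=
      (tendsto_const_nhds.add ((exp_neg_mul_tendsto k hk).const_mul c1)).add
        ((exp_neg_mul_tendsto eps heps).const_mul B)
    rw [show p + c1 * 0 + B * 0 = p by ring] at hlim
    exact hlim.congr' (((eventually_ge_atTop t0).mono fun t ht => (hTeq t ht).symm))
  · have hlim : Tendsto (fun t => q + (-c1) * Real.exp (-k * t) + (A - B) * Real.exp (-eps * t))
        atTop (𝓝 (q + (-c1) * 0 + (A - B) * 0)) :=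
      (tendsto_const_nhds.add ((exp_neg_mul_tendsto k hk).const_mul (-c1))).add
        ((exp_neg_mul_tendsto eps heps).const_mul (A - B))
    rw [show q + (-c1) * 0 + (A - B) * 0 = q by ring] at hlim
    exact hlim.congr' (((eventually_ge_atTop t0).mono fun t ht => (hSeq t ht).symm))
  · intro t ht
    constructor
    · rw [hTeq t ht]; ring
    · rw [hSeq t ht]; ring
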